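/- Let R be a commutative ring and let A be a finite or infinite matrix over R all of whose nonzero entries lie on two consecutive diagonals (i.e., there exists d such that A_{ij} = 0 unless j - i = d or j - i = d - 1). Then every minor of A is a product of entries of A; consequently, if R is a partially ordered commutative ring and all entries of A are nonnegative, then A is totally positive (all minors are nonnegative). -/

import Mathlib

/-- A minor of an infinite matrix `A : ℕ → ℕ → R`: the determinant of the
square submatrix obtained by selecting rows `r 0 < r 1 < ⋯` and columns
`c 0 < c 1 < ⋯`. -/
noncomputable def minor {R : Type*} [CommRing R] (A : ℕ → ℕ → R) {k : ℕ}
    (r c : Fin k → ℕ) : R :=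
  (Matrix.of fun i j => A (r i) (c j)).det

lemma bidiag_aux {R : Type*} [CommRing R] (A : ℕ → ℕ → R) (d : ℤ)
    (hA : ∀ i j : ℕ, (j : ℤ) - (i : ℤ) ≠ d → (j : ℤ) - (i : ℤ) ≠ d - 1 → A i j = 0) :
    ∀ (k : ℕ) (r c : Fin k → ℕ), StrictMono r → StrictMono c →
      (minor A r c = 0 ∨ ∃ p : Fin k → ℕ × ℕ, minor A r c = ∏ i, A (p i).1 (p i).2) := by
  intro k
  induction k with
  | zero =>
    intro r c _ _
    right
    exact ⟨Fin.elim0, by simp [minor, Matrix.det_fin_zero]⟩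
  | succ k ih =>
    intro r c hr hc
    by_cases h1 : d < (c 0 : ℤ) - r 0
    · left
      apply Matrix.det_eq_zero_of_row_eq_zero 0
      intro j
      have h2 : c 0 ≤ c j := hc.monotone (Fin.zero_le j)
      exact hA _ _ (by omega) (by omega)
    · by_cases h2 : (c 0 : ℤ) - r 0 < d - 1
      · left
        apply Matrix.det_eq_zero_of_column_eq_zero 0
        intro i
        have h3 : r 0 ≤ r i := hr.monotone (Fin.zero_le i)
        exact hA _ _ (by omega) (by omega)
      · have key : minor A r c = A (r 0) (c 0) * minor A (r ∘ Fin.succ) (c ∘ Fin.succ) := by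
          by_cases h3 : (c 0 : ℤ) - r 0 = d
          · unfold minor
            rw [Matrix.det_succ_row_zero, Finset.sum_eq_single 0]
            · simp [Fin.succAbove_zero]
              rfl
            · intro b _ hb
              have hb' : c 0 < c b := hc (Fin.pos_of_ne_zero hb)
              have : A (r 0) (c b) = 0 := hA _ _ (by omega) (by omega)
              simp [this]
            · simp
          · have h4 : (c 0 : ℤ) - r 0 = d - 1 := by omega
            unfold minor
            rw [Matrix.det_succ_column_zero, Finset.sum_eq_single 0]
            · simp [Fin.succAbove_zero]
              rfl
            · intro b _ hb
              have hb' : r 0 < r b := hr (Fin.pos_of_ne_zero hb)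
              have : A (r b) (c 0) = 0 := hA _ _ (by omega) (by omega)
              simp [this]
            · simp
        have hrs : StrictMono (r ∘ Fin.succ) := hr.comp fun a b h => Fin.succ_lt_succ_iff.mpr h
        have hcs : StrictMono (c ∘ Fin.succ) := hc.comp fun a b h => Fin.succ_lt_succ_iff.mpr h
        rcases ih (r ∘ Fin.succ) (c ∘ Fin.succ) hrs hcs with h | ⟨p, hp⟩
        · left; rw [key, h, mul_zero]
        · right
          refine ⟨Fin.cons (r 0, c 0) p, ?_⟩
          rw [key, hp, Fin.prod_univ_succ]
          simp

/-- If all nonzero entries of a matrix `A` lie on two consecutive diagonals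
(`A i j = 0` unless `j - i = d` or `j - i = d - 1`), then every minor of `A`
is a product of entries of `A`; consequently, over a partially ordered
commutative ring, if all entries of `A` are nonnegative then `A` is totally
positive (all its minors are nonnegative). -/
theorem bidiagonal_minors_and_TP
    {R : Type*} [CommRing R] {S : Type*} [CommRing S] [PartialOrder S] [IsOrderedRing S]
    (A : ℕ → ℕ → R) (d : ℤ)
    (hA : ∀ i j : ℕ, (j : ℤ) - (i : ℤ) ≠ d → (j : ℤ) - (i : ℤ) ≠ d - 1 → A i j = 0)
    (B : ℕ → ℕ → S) (e : ℤ)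
    (hB : ∀ i j : ℕ, (j : ℤ) - (i : ℤ) ≠ e → (j : ℤ) - (i : ℤ) ≠ e - 1 → B i j = 0) :
    (∀ (k : ℕ) (r c : Fin k → ℕ), StrictMono r → StrictMono c →
        (minor A r c = 0 ∨
          ∃ p : Fin k → ℕ × ℕ, minor A r c = ∏ i, A (p i).1 (p i).2))
    ∧ ((∀ i j, 0 ≤ B i j) →
        ∀ (k : ℕ) (r c : Fin k → ℕ), StrictMono r → StrictMono c →
          0 ≤ minor B r c) := by
  refine ⟨bidiag_aux A d hA, fun hpos k r c hr hc => ?_⟩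
  rcases bidiag_aux B e hB k r c hr hc with h | ⟨p, hp⟩
  · rw [h]
  · rw [hp]
    exact Finset.prod_nonneg fun i _ => hpos _ _
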